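/- arXiv:1510.04062 — 4 statements merged into one kernel-verified Lean document; each statement's English description precedes it below -/
import Mathlib

section
/- If λ lies in the interior of Λ, then ln Z is twice differentiable at λ and its Hessian matrix at λ equals the covariance matrix C(λ) of h under the density f_λ: ∂² ln Z/∂λ_j ∂λ_k (λ) = ∫_S h_j h_k f_λ dm − (∫_S h_j f_λ dm)(∫_S h_k f_λ dm). In particular the Hessian of ln Z is positive semidefinite at every interior point of Λ. -/
open MeasureTheory

set_option linter.unusedSectionVars false
set_option synthInstance.maxHeartbeats 1000000
set_option maxHeartbeats 1000000
/-- The partition function `Z(λ) = ∫ exp(-⟨λ, h(x)⟩) dm(x)`. -/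
noncomputable def partitionZ {S : Type*} [MeasurableSpace S] (m : Measure S)
    {M : ℕ} (h : S → Fin M → ℝ) (lam : Fin M → ℝ) : ℝ :=
  ∫ x, Real.exp (-(∑ k, lam k * h x k)) ∂m

/-- The domain `Λ = {λ : Z(λ) < ∞}` of the partition function. -/
def partitionDomain {S : Type*} [MeasurableSpace S] (m : Measure S)
    {M : ℕ} (h : S → Fin M → ℝ) : Set (Fin M → ℝ) :=
  {lam | Integrable (fun x => Real.exp (-(∑ k, lam k * h x k))) m}

/-- The maximum-entropy density `f_λ(x) = exp(-⟨λ, h(x)⟩) / Z(λ)`. -/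
noncomputable def maxentDensity {S : Type*} [MeasurableSpace S] (m : Measure S)
    {M : ℕ} (h : S → Fin M → ℝ) (lam : Fin M → ℝ) (x : S) : ℝ :=
  Real.exp (-(∑ k, lam k * h x k)) / partitionZ m h lam

/-- The covariance matrix of `h` under the density `f_λ`:
`C(λ)_{jk} = ∫ h_j h_k f_λ dm − (∫ h_j f_λ dm)(∫ h_k f_λ dm)`. -/
noncomputable def maxentCov {S : Type*} [MeasurableSpace S] (m : Measure S)
    {M : ℕ} (h : S → Fin M → ℝ) (lam : Fin M → ℝ) : Matrix (Fin M) (Fin M) ℝ :=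
  fun j k => ∫ x, h x j * h x k * maxentDensity m h lam x ∂m
    - (∫ x, h x j * maxentDensity m h lam x ∂m) * (∫ x, h x k * maxentDensity m h lam x ∂m)


namespace PZH
variable {S : Type*} [MeasurableSpace S] {M : ℕ}

/-- integrand -/
noncomputable def ee (h : S → Fin M → ℝ) (l : Fin M → ℝ) (x : S) : ℝ := Real.exp (-(∑ k, l k * h x k))

lemma ee_pos (h : S → Fin M → ℝ) (l : Fin M → ℝ) (x : S) : 0 < ee h l x := Real.exp_pos _

/-- the linear functional `v ↦ -∑ v k * h x k` -/
noncomputable def LL (h : S → Fin M → ℝ) (x : S) : (Fin M → ℝ) →L[ℝ] ℝ :=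
  -∑ k, h x k • (ContinuousLinearMap.proj k : ((Fin M → ℝ)) →L[ℝ] ℝ)

@[simp] lemma LL_apply (h : S → Fin M → ℝ) (x : S) (v : Fin M → ℝ) :
    LL h x v = -(∑ k, v k * h x k) := by
  simp [LL, mul_comm]

/-- sum of absolute values -/
def AA (h : S → Fin M → ℝ) (x : S) : ℝ := ∑ k, |h x k|

lemma AA_nonneg (h : S → Fin M → ℝ) (x : S) : 0 ≤ AA h x :=
  Finset.sum_nonneg fun _ _ => abs_nonneg _

lemma abs_le_AA (h : S → Fin M → ℝ) (x : S) (k : Fin M) : |h x k| ≤ AA h x :=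
  Finset.single_le_sum (f := fun k => |h x k|) (fun _ _ => abs_nonneg _) (Finset.mem_univ k)

lemma norm_LL_le (h : S → Fin M → ℝ) (x : S) : ‖LL h x‖ ≤ AA h x := by
  refine ContinuousLinearMap.opNorm_le_bound _ (AA_nonneg h x) fun v => ?_
  rw [LL_apply, norm_neg]
  calc ‖∑ k, v k * h x k‖ ≤ ∑ k, ‖v k * h x k‖ := norm_sum_le _ _
    _ ≤ ∑ k, |h x k| * ‖v‖ := by
        refine Finset.sum_le_sum fun k _ => ?_
        rw [Real.norm_eq_abs, abs_mul, mul_comm]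
        exact mul_le_mul_of_nonneg_left (by simpa using norm_le_pi_norm v k) (abs_nonneg _)
    _ = AA h x * ‖v‖ := by rw [AA, Finset.sum_mul]

lemma hasFDerivAt_ee (h : S → Fin M → ℝ) (x : S) (l : Fin M → ℝ) :
    HasFDerivAt (fun l' => ee h l' x) (ee h l x • LL h x) l := by
  have h2 := ((LL h x).hasFDerivAt (x := l)).exp
  simpa [ee, LL_apply] using h2

noncomputable def D1 (h : S → Fin M → ℝ) (l : Fin M → ℝ) (x : S) :
    (Fin M → ℝ) →L[ℝ] ℝ := ee h l x • LL h x

noncomputable def D2 (h : S → Fin M → ℝ) (l : Fin M → ℝ) (x : S) :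
    (Fin M → ℝ) →L[ℝ] ((Fin M → ℝ) →L[ℝ] ℝ) := ee h l x • ((LL h x).smulRight (LL h x))

lemma hasFDerivAt_D1 (h : S → Fin M → ℝ) (x : S) (l : Fin M → ℝ) :
    HasFDerivAt (fun l' => D1 h l' x) (D2 h l x) l := by
  have h2 := (hasFDerivAt_ee h x l).smul_const (LL h x)
  refine h2.congr_fderiv ?_
  ext v w
  simp [D2, D1, ContinuousLinearMap.smulRight_apply, smul_eq_mul]
  ring

lemma norm_D1_le (h : S → Fin M → ℝ) (l : Fin M → ℝ) (x : S) :
    ‖D1 h l x‖ ≤ AA h x * ee h l x := by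
  rw [D1]
  calc ‖ee h l x • LL h x‖ ≤ ‖ee h l x‖ * ‖LL h x‖ :=
        ContinuousLinearMap.opNorm_smul_le _ _
    _ = ee h l x * ‖LL h x‖ := by rw [Real.norm_eq_abs, abs_of_pos (ee_pos h l x)]
    _ ≤ ee h l x * AA h x := mul_le_mul_of_nonneg_left (norm_LL_le h x) (ee_pos h l x).le
    _ = AA h x * ee h l x := mul_comm _ _

lemma norm_D2_le (h : S → Fin M → ℝ) (l : Fin M → ℝ) (x : S) :
    ‖D2 h l x‖ ≤ AA h x ^ 2 * ee h l x := by
  rw [D2]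
  calc ‖ee h l x • (LL h x).smulRight (LL h x)‖
        ≤ ‖ee h l x‖ * ‖(LL h x).smulRight (LL h x)‖ := ContinuousLinearMap.opNorm_smul_le _ _
    _ = ee h l x * ‖(LL h x).smulRight (LL h x)‖ := by
        rw [Real.norm_eq_abs, abs_of_pos (ee_pos h l x)]
    _ ≤ ee h l x * (AA h x * AA h x) := by
        refine mul_le_mul_of_nonneg_left ?_ (ee_pos h l x).le
        calc ‖(LL h x).smulRight (LL h x)‖ ≤ ‖LL h x‖ * ‖LL h x‖ :=
              (ContinuousLinearMap.norm_smulRight_apply _ _).le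
          _ ≤ AA h x * AA h x :=
              mul_le_mul (norm_LL_le h x) (norm_LL_le h x) (norm_nonneg _) (AA_nonneg h x)
    _ = AA h x ^ 2 * ee h l x := by ring


section Meas
lemma cont_Lw : Continuous fun w : Fin M → ℝ =>
    (-∑ k, w k • (ContinuousLinearMap.proj k : ((Fin M → ℝ)) →L[ℝ] ℝ)) := by
  refine Continuous.neg ?_
  exact continuous_finset_sum _ fun k _ => (continuous_apply k).smul continuous_const

variable {m : Measure S} {h : S → Fin M → ℝ} (hmeas : ∀ k, Measurable fun x => h x k)
include hmeas

lemma meas_ee (l : Fin M → ℝ) : Measurable (fun x => ee h l x) := by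
  have : Measurable fun x => ∑ k, l k * h x k :=
    Finset.measurable_sum _ fun k _ => (hmeas k).const_mul (l k)
  exact (this.neg).exp

lemma meas_hfun : Measurable fun x => h x := measurable_pi_lambda _ hmeas

lemma sm_LL : AEStronglyMeasurable (fun x => LL h x) m := by
  have : (fun x => LL h x) = (fun w : Fin M → ℝ =>
      (-∑ k, w k • (ContinuousLinearMap.proj k : ((Fin M → ℝ)) →L[ℝ] ℝ))) ∘ (fun x => h x) := rfl
  rw [this]
  exact cont_Lw.comp_aestronglyMeasurable (meas_hfun hmeas).aestronglyMeasurable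

lemma sm_D1 (l : Fin M → ℝ) : AEStronglyMeasurable (fun x => D1 h l x) m :=
  ((meas_ee hmeas l).aestronglyMeasurable).smul (sm_LL hmeas)

lemma sm_D2 (l : Fin M → ℝ) : AEStronglyMeasurable (fun x => D2 h l x) m := by
  refine ((meas_ee hmeas l).aestronglyMeasurable).smul ?_
  have hc : Continuous fun w : Fin M → ℝ =>
      ((-∑ k, w k • (ContinuousLinearMap.proj k : ((Fin M → ℝ)) →L[ℝ] ℝ)).smulRight
       (-∑ k, w k • (ContinuousLinearMap.proj k : ((Fin M → ℝ)) →L[ℝ] ℝ))) := by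
    exact (isBoundedBilinearMap_smulRight (𝕜 := ℝ)).continuous.comp (cont_Lw.prodMk cont_Lw)
  exact hc.comp_aestronglyMeasurable (meas_hfun hmeas).aestronglyMeasurable

end Meas


/-- sign vector associated to a subset -/
def sgn (t : Finset (Fin M)) : Fin M → ℝ := fun k => if k ∈ t then 1 else -1

lemma norm_sgn_le (t : Finset (Fin M)) : ‖sgn t‖ ≤ 1 := by
  refine (pi_norm_le_iff_of_nonneg zero_le_one).2 fun k => ?_
  rw [sgn]
  rcases em (k ∈ t) with hk | hk <;> simp [hk]

lemma exp_sum_abs_le (c : ℝ) (w : Fin M → ℝ) :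
    Real.exp (∑ k, c * |w k|) ≤
      ∑ t ∈ (Finset.univ : Finset (Fin M)).powerset,
        Real.exp (∑ k, c * sgn t k * w k) := by
  rw [Real.exp_sum]
  have h1 : ∀ k : Fin M, Real.exp (c * |w k|) ≤
      Real.exp (c * w k) + Real.exp (-(c * w k)) := by
    intro k
    rcases abs_cases (w k) with ⟨hk, _⟩ | ⟨hk, _⟩ <;> rw [hk]
    · exact le_add_of_nonneg_right (Real.exp_pos _).le
    · rw [mul_neg]
      exact le_add_of_nonneg_left (Real.exp_pos _).le
  calc ∏ k, Real.exp (c * |w k|)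
      ≤ ∏ k, (Real.exp (c * w k) + Real.exp (-(c * w k))) :=
        Finset.prod_le_prod (fun k _ => (Real.exp_pos _).le) (fun k _ => h1 k)
    _ = ∑ t ∈ (Finset.univ : Finset (Fin M)).powerset,
        (∏ k ∈ t, Real.exp (c * w k)) * ∏ k ∈ Finset.univ \ t, Real.exp (-(c * w k)) :=
        Finset.prod_add _ _ _
    _ = ∑ t ∈ (Finset.univ : Finset (Fin M)).powerset,
        Real.exp (∑ k, c * sgn t k * w k) := by
        refine Finset.sum_congr rfl fun t ht => ?_
        rw [← Real.exp_sum, ← Real.exp_sum, ← Real.exp_add]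
        congr 1
        rw [← Finset.sum_sdiff (Finset.subset_univ t), add_comm]
        congr 1
        · refine Finset.sum_congr rfl fun k hk => ?_
          have : k ∉ t := (Finset.mem_sdiff.1 hk).2
          simp [sgn, this]
        · refine Finset.sum_congr rfl fun k hk => ?_
          have : k ∈ t := hk
          simp [sgn, this]

/-- dominating function -/
noncomputable def GG (h : S → Fin M → ℝ) (lam : Fin M → ℝ) (ε : ℝ) (x : S) : ℝ :=
  ∑ t ∈ (Finset.univ : Finset (Fin M)).powerset, ee h (lam - (4 * ε) • sgn t) x

lemma GG_nonneg (h : S → Fin M → ℝ) (lam : Fin M → ℝ) (ε : ℝ) (x : S) : 0 ≤ GG h lam ε x :=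
  Finset.sum_nonneg fun t _ => (ee_pos h _ x).le

lemma master_bound (h : S → Fin M → ℝ) (lam : Fin M → ℝ) {ε : ℝ} (hε : 0 < ε)
    {l : Fin M → ℝ} (hl : dist l lam ≤ 2 * ε) (x : S) :
    (1 + AA h x + AA h x ^ 2) * ee h l x ≤ (1 + ε⁻¹ + ε⁻¹ ^ 2) * GG h lam ε x := by
  set A := AA h x with hA
  have hA0 : 0 ≤ A := AA_nonneg h x
  have step1 : ee h l x ≤ Real.exp (-(∑ k, lam k * h x k) + 2 * ε * A) := by
    rw [ee, Real.exp_le_exp]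
    have : ∑ k, lam k * h x k - ∑ k, l k * h x k ≤ 2 * ε * A := by
      rw [← Finset.sum_sub_distrib]
      calc ∑ k, (lam k * h x k - l k * h x k) = ∑ k, (lam k - l k) * h x k := by
            refine Finset.sum_congr rfl fun k _ => by ring
        _ ≤ ∑ k, 2 * ε * |h x k| := by
            refine Finset.sum_le_sum fun k _ => ?_
            calc (lam k - l k) * h x k ≤ |(lam k - l k) * h x k| := le_abs_self _
              _ = |lam k - l k| * |h x k| := abs_mul _ _
              _ ≤ (2 * ε) * |h x k| := by
                  refine mul_le_mul_of_nonneg_right ?_ (abs_nonneg _)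
                  have := dist_le_pi_dist l lam k
                  rw [Real.dist_eq] at this
                  rw [abs_sub_comm]
                  exact this.trans hl
        _ = 2 * ε * A := by rw [hA, AA, Finset.mul_sum]
    linarith
  have e1 : (1 : ℝ) ≤ Real.exp (2 * ε * A) := Real.one_le_exp (by positivity)
  have e2 : A ≤ ε⁻¹ * Real.exp (2 * ε * A) := by
    have h1 : ε * A ≤ Real.exp (ε * A) := (Real.add_one_le_exp (ε * A)).trans' (by linarith)
    have h2 : Real.exp (ε * A) ≤ Real.exp (2 * ε * A) := by
      rw [Real.exp_le_exp]; nlinarith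
    calc A = ε⁻¹ * (ε * A) := by field_simp
      _ ≤ ε⁻¹ * Real.exp (2 * ε * A) := by
          refine mul_le_mul_of_nonneg_left (h1.trans h2) (by positivity)
  have e3 : A ^ 2 ≤ ε⁻¹ ^ 2 * Real.exp (2 * ε * A) := by
    have h1 : ε * A ≤ Real.exp (ε * A) := (Real.add_one_le_exp (ε * A)).trans' (by linarith)
    have h2 : (ε * A) ^ 2 ≤ Real.exp (ε * A) ^ 2 := by
      refine pow_le_pow_left₀ (by positivity) h1 2
    have h3 : Real.exp (ε * A) ^ 2 = Real.exp (2 * ε * A) := by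
      rw [← Real.exp_nat_mul]; ring_nf
    calc A ^ 2 = ε⁻¹ ^ 2 * (ε * A) ^ 2 := by field_simp
      _ ≤ ε⁻¹ ^ 2 * Real.exp (2 * ε * A) := by
          refine mul_le_mul_of_nonneg_left (h2.trans_eq h3) (by positivity)
  have step2 : 1 + A + A ^ 2 ≤ (1 + ε⁻¹ + ε⁻¹ ^ 2) * Real.exp (2 * ε * A) := by
    rw [add_mul, add_mul, one_mul]
    exact add_le_add (add_le_add e1 e2) e3
  have step3 : Real.exp (-(∑ k, lam k * h x k)) * Real.exp (4 * ε * A) ≤ GG h lam ε x := by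
    have h4 : Real.exp (4 * ε * A) ≤
        ∑ t ∈ (Finset.univ : Finset (Fin M)).powerset,
          Real.exp (∑ k, (4 * ε) * sgn t k * h x k) := by
      have := exp_sum_abs_le (4 * ε) (fun k => h x k)
      calc Real.exp (4 * ε * A) = Real.exp (∑ k, (4 * ε) * |h x k|) := by
            rw [hA, AA, Finset.mul_sum]
        _ ≤ _ := this
    calc Real.exp (-(∑ k, lam k * h x k)) * Real.exp (4 * ε * A)
        ≤ Real.exp (-(∑ k, lam k * h x k)) *
          ∑ t ∈ (Finset.univ : Finset (Fin M)).powerset,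
            Real.exp (∑ k, (4 * ε) * sgn t k * h x k) :=
          mul_le_mul_of_nonneg_left h4 (Real.exp_pos _).le
      _ = GG h lam ε x := by
          rw [GG, Finset.mul_sum]
          refine Finset.sum_congr rfl fun t _ => ?_
          rw [ee, ← Real.exp_add]
          congr 1
          rw [← Finset.sum_neg_distrib, ← Finset.sum_add_distrib, ← Finset.sum_neg_distrib]
          refine Finset.sum_congr rfl fun k _ => ?_
          simp only [Pi.sub_apply, Pi.smul_apply, smul_eq_mul]
          ring
  calc (1 + A + A ^ 2) * ee h l x
      ≤ (1 + A + A ^ 2) * Real.exp (-(∑ k, lam k * h x k) + 2 * ε * A) :=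
        mul_le_mul_of_nonneg_left step1 (by positivity)
    _ ≤ ((1 + ε⁻¹ + ε⁻¹ ^ 2) * Real.exp (2 * ε * A)) *
        Real.exp (-(∑ k, lam k * h x k) + 2 * ε * A) :=
        mul_le_mul_of_nonneg_right step2 (Real.exp_pos _).le
    _ = (1 + ε⁻¹ + ε⁻¹ ^ 2) *
        (Real.exp (-(∑ k, lam k * h x k)) * Real.exp (4 * ε * A)) := by
        rw [mul_assoc, ← Real.exp_add, ← Real.exp_add]; ring_nf
    _ ≤ (1 + ε⁻¹ + ε⁻¹ ^ 2) * GG h lam ε x := by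
        refine mul_le_mul_of_nonneg_left step3 (by positivity)


section Int
variable {m : Measure S} {h : S → Fin M → ℝ} (hmeas : ∀ k, Measurable fun x => h x k)
  {lam : Fin M → ℝ} {δ ε : ℝ} (hδ : 0 < δ)
  (hsub : Metric.ball lam δ ⊆ partitionDomain m h) (hεδ : ε = δ / 5)
include hδ hsub hεδ

lemma eps_pos : 0 < ε := by rw [hεδ]; linarith

lemma GG_int : Integrable (GG h lam ε) m := by
  refine integrable_finset_sum _ fun t _ => ?_
  have hmem : lam - (4 * ε) • sgn t ∈ Metric.ball lam δ := by
    rw [Metric.mem_ball, dist_eq_norm, sub_sub_cancel_left, norm_neg, norm_smul,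
      Real.norm_eq_abs]
    have hε : 0 < ε := eps_pos hδ hsub hεδ
    calc |4 * ε| * ‖sgn t‖ ≤ (4 * ε) * 1 := by
          rw [abs_of_pos (by linarith)]
          exact mul_le_mul_of_nonneg_left (norm_sgn_le t) (by linarith)
      _ < δ := by rw [hεδ]; linarith
  exact hsub hmem

lemma int_of_master {E : Type*} [NormedAddCommGroup E] {l : Fin M → ℝ}
    (hl : dist l lam ≤ 2 * ε) {f : S → E} (hf : AEStronglyMeasurable f m)
    (hb : ∀ x, ‖f x‖ ≤ (1 + AA h x + AA h x ^ 2) * ee h l x) : Integrable f m := by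
  refine Integrable.mono' (((GG_int hδ hsub hεδ).const_mul (1 + ε⁻¹ + ε⁻¹ ^ 2))) hf
    (Filter.Eventually.of_forall fun x => ?_)
  exact (hb x).trans (master_bound h lam (eps_pos hδ hsub hεδ) hl x)

lemma poly_le (x : S) (a : ℝ) (ha : 0 ≤ a)
    (h1 : a ≤ 1 + AA h x + AA h x ^ 2) {l : Fin M → ℝ} :
    a * ee h l x ≤ (1 + AA h x + AA h x ^ 2) * ee h l x :=
  mul_le_mul_of_nonneg_right h1 (ee_pos h l x).le

include hmeas

lemma int_ee {l : Fin M → ℝ} (hl : dist l lam ≤ 2 * ε) :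
    Integrable (fun x => ee h l x) m := by
  refine int_of_master hδ hsub hεδ hl (meas_ee hmeas l).aestronglyMeasurable fun x => ?_
  have hA := AA_nonneg h x
  rw [Real.norm_eq_abs, abs_of_pos (ee_pos h l x)]
  nlinarith [ee_pos h l x, sq_nonneg (AA h x)]

lemma int_D1 {l : Fin M → ℝ} (hl : dist l lam ≤ 2 * ε) :
    Integrable (fun x => D1 h l x) m := by
  refine int_of_master hδ hsub hεδ hl (sm_D1 hmeas l) fun x => ?_
  refine (norm_D1_le h l x).trans (poly_le hδ hsub hεδ x _ (AA_nonneg h x) ?_)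
  nlinarith [AA_nonneg h x, sq_nonneg (AA h x)]

lemma int_D2 {l : Fin M → ℝ} (hl : dist l lam ≤ 2 * ε) :
    @Integrable ((Fin M → ℝ) →L[ℝ] (Fin M → ℝ) →L[ℝ] ℝ) _ SeminormedAddGroup.toContinuousENorm _ _
      (fun x => D2 h l x) m := by
  refine int_of_master (E := (Fin M → ℝ) →L[ℝ] (Fin M → ℝ) →L[ℝ] ℝ) hδ hsub hεδ hl (sm_D2 hmeas l) fun x => ?_
  refine (norm_D2_le h l x).trans (poly_le hδ hsub hεδ x _ (by positivity) ?_)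
  nlinarith [AA_nonneg h x]

lemma int_hj_ee (j : Fin M) {l : Fin M → ℝ} (hl : dist l lam ≤ 2 * ε) :
    Integrable (fun x => h x j * ee h l x) m := by
  refine int_of_master hδ hsub hεδ hl
    ((hmeas j).mul (meas_ee hmeas l)).aestronglyMeasurable fun x => ?_
  rw [Real.norm_eq_abs, abs_mul, abs_of_pos (ee_pos h l x)]
  refine poly_le hδ hsub hεδ x _ (abs_nonneg _) ?_
  have := abs_le_AA h x j
  nlinarith [AA_nonneg h x, sq_nonneg (AA h x)]

lemma int_hjk_ee (j k : Fin M) {l : Fin M → ℝ} (hl : dist l lam ≤ 2 * ε) :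
    Integrable (fun x => h x j * h x k * ee h l x) m := by
  refine int_of_master hδ hsub hεδ hl
    (((hmeas j).mul (hmeas k)).mul (meas_ee hmeas l)).aestronglyMeasurable fun x => ?_
  rw [Real.norm_eq_abs, abs_mul, abs_of_pos (ee_pos h l x)]
  refine poly_le hδ hsub hεδ x _ (abs_nonneg _) ?_
  rw [abs_mul]
  have hj := abs_le_AA h x j
  have hk := abs_le_AA h x k
  nlinarith [abs_nonneg (h x j), abs_nonneg (h x k), AA_nonneg h x]

end Int

lemma Z_pos {m : Measure S} {h : S → Fin M → ℝ} (hm : m ≠ 0) {l : Fin M → ℝ}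
    (hl : Integrable (fun x => ee h l x) m) : 0 < partitionZ m h l := by
  have : partitionZ m h l = ∫ x, ee h l x ∂m := rfl
  rw [this]
  refine (integral_pos_iff_support_of_nonneg (fun x => (ee_pos h l x).le) hl).2 ?_
  have hs : Function.support (fun x => ee h l x) = Set.univ :=
    Set.eq_univ_of_forall fun x => (ee_pos h l x).ne'
  rw [hs]
  exact Measure.measure_univ_pos.2 hm


section Deriv
variable {m : Measure S} {h : S → Fin M → ℝ} (hmeas : ∀ k, Measurable fun x => h x k)
  {lam : Fin M → ℝ} {δ ε : ℝ} (hδ : 0 < δ)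
  (hsub : Metric.ball lam δ ⊆ partitionDomain m h) (hεδ : ε = δ / 5)
include hmeas hδ hsub hεδ

lemma dist_le_of_ball {l l' : Fin M → ℝ} (hl : l ∈ Metric.ball lam ε)
    (hl' : l' ∈ Metric.ball l ε) : dist l' lam ≤ 2 * ε := by
  calc dist l' lam ≤ dist l' l + dist l lam := dist_triangle _ _ _
    _ ≤ ε + ε := add_le_add (Metric.mem_ball.1 hl').le (Metric.mem_ball.1 hl).le
    _ = 2 * ε := by ring

lemma hasFDerivAt_Z {l : Fin M → ℝ} (hl : l ∈ Metric.ball lam ε) :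
    HasFDerivAt (fun l' => partitionZ m h l') (∫ x, D1 h l x ∂m) l := by
  have hε : 0 < ε := eps_pos hδ hsub hεδ
  have hself : dist l lam ≤ 2 * ε :=
    dist_le_of_ball hmeas hδ hsub hεδ hl (Metric.mem_ball_self hε)
  show HasFDerivAt (fun l' => ∫ x, ee h l' x ∂m) (∫ x, D1 h l x ∂m) l
  refine hasFDerivAt_integral_of_dominated_of_fderiv_le (hs := Metric.ball_mem_nhds _ hε)
    (bound := fun x => (1 + ε⁻¹ + ε⁻¹ ^ 2) * GG h lam ε x)
    (Filter.Eventually.of_forall fun l' => (meas_ee hmeas l').aestronglyMeasurable)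
    (int_ee hmeas hδ hsub hεδ hself) (sm_D1 hmeas l)
    (Filter.Eventually.of_forall fun x => fun l' hl' => ?_)
    ((GG_int hδ hsub hεδ).const_mul _)
    (Filter.Eventually.of_forall fun x => fun l' _ => hasFDerivAt_ee h x l')
  have hd : dist l' lam ≤ 2 * ε := dist_le_of_ball hmeas hδ hsub hεδ hl hl'
  refine (norm_D1_le h l' x).trans ?_
  refine (poly_le hδ hsub hεδ x _ (AA_nonneg h x) ?_).trans
    (master_bound h lam (eps_pos hδ hsub hεδ) hd x)
  nlinarith [AA_nonneg h x, sq_nonneg (AA h x)]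

lemma hasFDerivAt_Z1 :
    HasFDerivAt (fun l' => ∫ x, D1 h l' x ∂m) (∫ x, D2 h lam x ∂m) lam := by
  have hε : 0 < ε := eps_pos hδ hsub hεδ
  have hself : dist lam lam ≤ 2 * ε := by simp; positivity
  refine hasFDerivAt_integral_of_dominated_of_fderiv_le (hs := Metric.ball_mem_nhds _ hε)
    (bound := fun x => (1 + ε⁻¹ + ε⁻¹ ^ 2) * GG h lam ε x)
    (Filter.Eventually.of_forall fun l' => sm_D1 hmeas l')
    (int_D1 hmeas hδ hsub hεδ hself) (sm_D2 hmeas lam)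
    (Filter.Eventually.of_forall fun x => fun l' hl' => ?_)
    ((GG_int hδ hsub hεδ).const_mul _)
    (Filter.Eventually.of_forall fun x => fun l' _ => hasFDerivAt_D1 h x l')
  have hd : dist l' lam ≤ 2 * ε :=
    dist_le_of_ball hmeas hδ hsub hεδ (Metric.mem_ball_self hε) hl'
  refine (norm_D2_le h l' x).trans ?_
  refine (poly_le hδ hsub hεδ x _ (by positivity) ?_).trans
    (master_bound h lam (eps_pos hδ hsub hεδ) hd x)
  nlinarith [AA_nonneg h x]

lemma LL_single (x : S) (j : Fin M) : LL h x (Pi.single j 1) = -(h x j) := by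
  rw [LL_apply]
  congr 1
  rw [Finset.sum_eq_single j (fun k _ hk => by simp [Pi.single_apply, hk]) (by simp)]
  simp

lemma eval_Z1 {l : Fin M → ℝ} (hl : dist l lam ≤ 2 * ε) (j : Fin M) :
    (∫ x, D1 h l x ∂m) (Pi.single j 1) = -∫ x, h x j * ee h l x ∂m := by
  rw [ContinuousLinearMap.integral_apply (int_D1 hmeas hδ hsub hεδ hl)]
  rw [← MeasureTheory.integral_neg]
  refine integral_congr_ae (Filter.Eventually.of_forall fun x => ?_)
  simp only [D1]
  rw [ContinuousLinearMap.smul_apply, LL_single hmeas hδ hsub hεδ]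
  simp [smul_eq_mul]; ring

lemma eval_Z2 (j k : Fin M) :
    ((∫ x, D2 h lam x ∂m) (Pi.single j 1)) (Pi.single k 1)
      = ∫ x, h x j * h x k * ee h lam x ∂m := by
  have hε : 0 < ε := eps_pos hδ hsub hεδ
  have hself : dist lam lam ≤ 2 * ε := by simp; positivity
  have hint := int_D2 hmeas hδ hsub hεδ hself
  rw [ContinuousLinearMap.integral_apply hint,
    ContinuousLinearMap.integral_apply (hint.apply_continuousLinearMap _)]
  refine integral_congr_ae (Filter.Eventually.of_forall fun x => ?_)
  simp only [D2]
  rw [ContinuousLinearMap.smul_apply, ContinuousLinearMap.smul_apply,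
    ContinuousLinearMap.smulRight_apply, ContinuousLinearMap.smul_apply,
    LL_single hmeas hδ hsub hεδ, LL_single hmeas hδ hsub hεδ]
  simp [smul_eq_mul]; ring

end Deriv

end PZH

open PZH in
/-- at any interior point `λ` of `Λ`, `ln Z` is twice differentiable and its
Hessian matrix equals the covariance matrix `C(λ)` of `h` under `f_λ`; in particular the
Hessian of `ln Z` is positive semidefinite at every interior point. -/
theorem partitionZ_hessian
    {S : Type*} [MeasurableSpace S] (m : Measure S) [SigmaFinite m]
    {M : ℕ} (h : S → Fin M → ℝ) (hmeas : ∀ k, Measurable fun x => h x k)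
    (lam : Fin M → ℝ) (hlam : lam ∈ interior (partitionDomain m h)) :
    DifferentiableAt ℝ (fun l => Real.log (partitionZ m h l)) lam ∧
    (∀ k, DifferentiableAt ℝ
        (fun l => fderiv ℝ (fun l' => Real.log (partitionZ m h l')) l (Pi.single k 1)) lam) ∧
    (∀ j k, fderiv ℝ
        (fun l => fderiv ℝ (fun l' => Real.log (partitionZ m h l')) l (Pi.single k 1)) lam
          (Pi.single j 1)
        = maxentCov m h lam j k) ∧
    (∀ v : Fin M → ℝ, 0 ≤ ∑ j, ∑ k, v j * v k * maxentCov m h lam j k) := by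
  classical
  by_cases hm : m = 0
  · subst hm
    have hZ0 : (fun l : Fin M → ℝ => Real.log (partitionZ (0 : Measure S) h l))
        = fun _ => (0 : ℝ) := by
      funext l
      simp [partitionZ]
    have hCov : ∀ j k, maxentCov (0 : Measure S) h lam j k = 0 := by
      intro j k; simp [maxentCov]
    refine ⟨?_, ?_, ?_, ?_⟩
    · rw [hZ0]; exact differentiableAt_const 0
    · intro k; rw [hZ0]
      simp only [fderiv_fun_const, Pi.zero_apply, ContinuousLinearMap.zero_apply]
      exact differentiableAt_const 0
    · intro j k; rw [hZ0, hCov]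
      simp [fderiv_const]
    · intro v
      simp only [hCov, mul_zero]
      simp
  · obtain ⟨δ, hδpos, hsub⟩ := Metric.mem_nhds_iff.1 (mem_interior_iff_mem_nhds.1 hlam)
    have hεδ : (δ / 5 : ℝ) = δ / 5 := rfl
    set ε : ℝ := δ / 5 with hεd
    have hε : 0 < ε := by positivity
    have hball : Metric.ball lam ε ∈ nhds lam := Metric.ball_mem_nhds _ hε
    have hmem0 : lam ∈ Metric.ball lam ε := Metric.mem_ball_self hε
    have hdist0 : dist lam lam ≤ 2 * ε := by simp; positivity
    have hZpos : ∀ l ∈ Metric.ball lam ε, 0 < partitionZ m h l := by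
      intro l hl
      refine Z_pos hm (int_ee hmeas hδpos hsub hεd ?_)
      have := (Metric.mem_ball.1 hl).le
      linarith
    set Z : ℝ := partitionZ m h lam with hZdef
    have hZne : Z ≠ 0 := (hZpos lam hmem0).ne'
    have hlog : ∀ l ∈ Metric.ball lam ε,
        HasFDerivAt (fun l' => Real.log (partitionZ m h l'))
          ((partitionZ m h l)⁻¹ • (∫ x, D1 h l x ∂m)) l := fun l hl =>
      (hasFDerivAt_Z hmeas hδpos hsub hεd hl).log (hZpos l hl).ne'
    have hEq : ∀ k : Fin M,
        (fun l => fderiv ℝ (fun l' => Real.log (partitionZ m h l')) l (Pi.single k 1))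
          =ᶠ[nhds lam]
        fun l => (partitionZ m h l)⁻¹ * ((∫ x, D1 h l x ∂m) (Pi.single k 1)) := by
      intro k
      filter_upwards [hball] with l hl
      rw [(hlog l hl).fderiv]
      simp
    have hinv : HasFDerivAt (fun l => (partitionZ m h l)⁻¹)
        ((-(Z ^ 2)⁻¹) • (∫ x, D1 h lam x ∂m)) lam :=
      (hasDerivAt_inv hZne).comp_hasFDerivAt lam (hasFDerivAt_Z hmeas hδpos hsub hεd hmem0)
    have hA : ∀ k : Fin M, HasFDerivAt
        (fun l => (∫ x, D1 h l x ∂m) (Pi.single k 1))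
        ((ContinuousLinearMap.apply ℝ ℝ (Pi.single k 1)).comp (∫ x, D2 h lam x ∂m)) lam :=
      fun k => by
        have := ((ContinuousLinearMap.apply ℝ ℝ (Pi.single k 1)).hasFDerivAt).comp lam
          (hasFDerivAt_Z1 hmeas hδpos hsub hεd)
        exact this
    have hφ : ∀ k : Fin M, HasFDerivAt
        (fun l => (partitionZ m h l)⁻¹ * ((∫ x, D1 h l x ∂m) (Pi.single k 1)))
        (Z⁻¹ • ((ContinuousLinearMap.apply ℝ ℝ (Pi.single k 1)).comp (∫ x, D2 h lam x ∂m))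
          + ((∫ x, D1 h lam x ∂m) (Pi.single k 1)) •
              ((-(Z ^ 2)⁻¹) • (∫ x, D1 h lam x ∂m))) lam := by
      intro k
      have := hinv.mul (hA k)
      exact this
    -- the density rewriting
    have hdens : ∀ f : S → ℝ, (∫ x, f x * maxentDensity m h lam x ∂m)
        = (∫ x, f x * ee h lam x ∂m) / Z := by
      intro f
      have : ∀ x, f x * maxentDensity m h lam x = (f x * ee h lam x) / Z := by
        intro x
        show f x * (ee h lam x / Z) = _
        ring
      simp_rw [this]
      exact integral_div Z _
    refine ⟨(hlog lam hmem0).differentiableAt, ?_, ?_, ?_⟩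
    · intro k
      exact (Filter.EventuallyEq.differentiableAt_iff (hEq k)).2 (hφ k).differentiableAt
    · intro j k
      rw [Filter.EventuallyEq.fderiv_eq (hEq k), (hφ k).fderiv]
      have e1 : ∀ u : Fin M, (∫ x, D1 h lam x ∂m) (Pi.single u 1)
          = -∫ x, h x u * ee h lam x ∂m :=
        fun u => eval_Z1 hmeas hδpos hsub hεd hdist0 u
      have e2 : ((∫ x, D2 h lam x ∂m) (Pi.single j 1)) (Pi.single k 1)
          = ∫ x, h x j * h x k * ee h lam x ∂m := eval_Z2 hmeas hδpos hsub hεd j k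
      rw [ContinuousLinearMap.add_apply, ContinuousLinearMap.smul_apply,
        ContinuousLinearMap.comp_apply, ContinuousLinearMap.apply_apply,
        ContinuousLinearMap.smul_apply, ContinuousLinearMap.smul_apply]
      rw [e2, e1 j, e1 k]
      have hCov : maxentCov m h lam j k
          = (∫ x, h x j * h x k * ee h lam x ∂m) / Z
            - ((∫ x, h x j * ee h lam x ∂m) / Z) * ((∫ x, h x k * ee h lam x ∂m) / Z) := by
        rw [maxentCov]
        rw [hdens fun x => h x j * h x k, hdens fun x => h x j, hdens fun x => h x k]
      rw [hCov]
      simp only [smul_eq_mul]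
      field_simp
      ring
    · intro v
      have hρ_nonneg : ∀ x, 0 ≤ maxentDensity m h lam x := fun x =>
        div_nonneg (ee_pos h lam x).le (hZpos lam hmem0).le
      have i_ee := int_ee hmeas hδpos hsub hεd hdist0
      have iρ : Integrable (fun x => maxentDensity m h lam x) m := i_ee.div_const Z
      have iρ1 : ∫ x, maxentDensity m h lam x ∂m = 1 := by
        have : ∀ x, maxentDensity m h lam x = ee h lam x / Z := fun x => rfl
        simp_rw [this]
        rw [integral_div]
        exact div_self hZne
      have ijρ : ∀ j, Integrable (fun x => h x j * maxentDensity m h lam x) m := by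
        intro j
        have h1 := (int_hj_ee hmeas hδpos hsub hεd j hdist0).div_const Z
        have h2 : (fun x => h x j * maxentDensity m h lam x)
            = fun x => (h x j * ee h lam x) / Z := by
          funext x
          show h x j * (ee h lam x / Z) = _
          ring
        rw [h2]; exact h1
      have ijkρ : ∀ j k, Integrable (fun x => h x j * h x k * maxentDensity m h lam x) m := by
        intro j k
        have h1 := (int_hjk_ee hmeas hδpos hsub hεd j k hdist0).div_const Z
        have h2 : (fun x => h x j * h x k * maxentDensity m h lam x)
            = fun x => (h x j * h x k * ee h lam x) / Z := by
          funext x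
          show h x j * h x k * (ee h lam x / Z) = _
          ring
        rw [h2]; exact h1
      set g : S → ℝ := fun x => ∑ k, v k * h x k with hgdef
      set c : ℝ := ∑ k, v k * ∫ x, h x k * maxentDensity m h lam x ∂m with hcdef
      have hgpt : ∀ x, g x * maxentDensity m h lam x
          = ∑ k, v k * (h x k * maxentDensity m h lam x) := by
        intro x
        rw [hgdef, Finset.sum_mul]
        exact Finset.sum_congr rfl fun k _ => by ring
      have hg2pt : ∀ x, g x ^ 2 * maxentDensity m h lam x
          = ∑ j, ∑ k, v j * v k * (h x j * h x k * maxentDensity m h lam x) := by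
        intro x
        rw [hgdef, sq, Finset.sum_mul_sum, Finset.sum_mul]
        refine Finset.sum_congr rfl fun j _ => ?_
        rw [Finset.sum_mul]
        exact Finset.sum_congr rfl fun k _ => by ring
      have igρ : Integrable (fun x => g x * maxentDensity m h lam x) m := by
        have : (fun x => g x * maxentDensity m h lam x)
            = fun x => ∑ k, v k * (h x k * maxentDensity m h lam x) := funext hgpt
        rw [this]
        exact integrable_finset_sum _ fun k _ => (ijρ k).const_mul _
      have ig2ρ : Integrable (fun x => g x ^ 2 * maxentDensity m h lam x) m := by
        have : (fun x => g x ^ 2 * maxentDensity m h lam x)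
            = fun x => ∑ j, ∑ k, v j * v k * (h x j * h x k * maxentDensity m h lam x) :=
          funext hg2pt
        rw [this]
        exact integrable_finset_sum _ fun j _ =>
          integrable_finset_sum _ fun k _ => (ijkρ j k).const_mul _
      have E1 : ∫ x, g x * maxentDensity m h lam x ∂m = c := by
        simp_rw [hgpt]
        rw [integral_finset_sum _ fun k _ => (ijρ k).const_mul _]
        exact Finset.sum_congr rfl fun k _ => integral_const_mul _ _
      have E2 : ∫ x, g x ^ 2 * maxentDensity m h lam x ∂m
          = ∑ j, ∑ k, v j * v k * ∫ x, h x j * h x k * maxentDensity m h lam x ∂m := by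
        simp_rw [hg2pt]
        rw [integral_finset_sum _ fun j _ =>
          integrable_finset_sum _ fun k _ => (ijkρ j k).const_mul _]
        refine Finset.sum_congr rfl fun j _ => ?_
        rw [integral_finset_sum _ fun k _ => (ijkρ j k).const_mul _]
        exact Finset.sum_congr rfl fun k _ => integral_const_mul _ _
      have key : 0 ≤ ∫ x, (g x - c) ^ 2 * maxentDensity m h lam x ∂m :=
        integral_nonneg fun x => mul_nonneg (sq_nonneg _) (hρ_nonneg x)
      have expand : ∫ x, (g x - c) ^ 2 * maxentDensity m h lam x ∂m
          = (∫ x, g x ^ 2 * maxentDensity m h lam x ∂m) - 2 * c * c + c ^ 2 := by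
        have hfun : (fun x => (g x - c) ^ 2 * maxentDensity m h lam x)
            = fun x => (g x ^ 2 * maxentDensity m h lam x
                - 2 * c * (g x * maxentDensity m h lam x))
              + c ^ 2 * maxentDensity m h lam x := by
          funext x; ring
        have i1 : Integrable (fun x => g x ^ 2 * maxentDensity m h lam x
            - 2 * c * (g x * maxentDensity m h lam x)) m := ig2ρ.sub (igρ.const_mul _)
        have i2 : Integrable (fun x => c ^ 2 * maxentDensity m h lam x) m := iρ.const_mul _
        have i3 : Integrable (fun x => 2 * c * (g x * maxentDensity m h lam x)) m :=
          igρ.const_mul _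
        rw [hfun, integral_add i1 i2, integral_sub ig2ρ i3, integral_const_mul,
          integral_const_mul, E1, iρ1]
        ring
      have hsplit : ∑ j, ∑ k, v j * v k * maxentCov m h lam j k
          = (∫ x, g x ^ 2 * maxentDensity m h lam x ∂m) - c ^ 2 := by
        have hc2 : c ^ 2 = ∑ j, ∑ k, v j * v k *
            ((∫ x, h x j * maxentDensity m h lam x ∂m)
              * (∫ x, h x k * maxentDensity m h lam x ∂m)) := by
          rw [hcdef, sq, Finset.sum_mul_sum]
          refine Finset.sum_congr rfl fun j _ => Finset.sum_congr rfl fun k _ => by ring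
        rw [E2, hc2, ← Finset.sum_sub_distrib]
        refine Finset.sum_congr rfl fun j _ => ?_
        rw [← Finset.sum_sub_distrib]
        refine Finset.sum_congr rfl fun k _ => ?_
        rw [maxentCov]
        ring
      rw [hsplit]
      nlinarith [key, expand]
end

section
/- Let (X_n)_{n≥1} be i.i.d. S-valued random variables with E[h(X₁)] = d = φ(λ*), where λ* is in the interior of Λ and C(λ*) is strictly positive definite, and let d̂_N = (1/N)∑_{n=1}^N h(X_n), λ̂_N = ψ(d̂_N) (defined for large N almost surely). Then the sample maximum-entropy densities converge to f* = f_{λ*} in L¹(m): almost surely, ∫_S |f_{λ̂_N}(x) − f*(x)| dm(x) → 0 as N → ∞. -/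
open MeasureTheory ProbabilityTheory Matrix Filter Topology

/-- The moment map `φ(λ) = ∫ h f_λ dm`. -/
noncomputable def momentMap {S : Type*} [MeasurableSpace S] (m : Measure S)
    {M : ℕ} (h : S → Fin M → ℝ) (lam : Fin M → ℝ) : Fin M → ℝ :=
  fun k => ∫ x, h x k * maxentDensity m h lam x ∂m

/-- The empirical moment vector `d̂_N = (1/N) ∑_{n=1}^N h(X_n)`. -/
noncomputable def empiricalMoments {S Ω : Type*} {M : ℕ} (h : S → Fin M → ℝ)
    (X : ℕ → Ω → S) (N : ℕ) (ω : Ω) : Fin M → ℝ :=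
  (N : ℝ)⁻¹ • ∑ n ∈ Finset.range N, h (X n ω)

/-- Key domination lemma: near an interior point of the domain, the exponential integrand
is dominated by a single integrable function. -/
lemma exists_dominating {S : Type*} [MeasurableSpace S] (m : Measure S)
    {M : ℕ} (h : S → Fin M → ℝ) (lamstar : Fin M → ℝ)
    (hlam : lamstar ∈ interior (partitionDomain m h)) :
    ∃ δ > 0, ∃ g : S → ℝ, Integrable g m ∧ (∀ x, 0 ≤ g x) ∧
      ∀ lam : Fin M → ℝ, (∀ k, |lam k - lamstar k| ≤ δ) →
        ∀ x, Real.exp (-(∑ k, lam k * h x k)) ≤ g x := by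
  classical
  obtain ⟨ε, εpos, hball⟩ := Metric.mem_nhds_iff.mp (mem_interior_iff_mem_nhds.mp hlam)
  set δ := ε / 2 with hδ
  have δpos : 0 < δ := by positivity
  set v : Finset (Fin M) → (Fin M → ℝ) :=
    fun t k => lamstar k + (if k ∈ t then -δ else δ) with hv
  have hvmem : ∀ t : Finset (Fin M), v t ∈ partitionDomain m h := by
    intro t
    apply hball
    rw [Metric.mem_ball, dist_pi_lt_iff εpos]
    intro k
    simp only [hv, Real.dist_eq, add_sub_cancel_left]
    have : |(if k ∈ t then -δ else δ)| = δ := by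
      split
      · rw [abs_neg, abs_of_pos δpos]
      · rw [abs_of_pos δpos]
    rw [this, hδ]; linarith
  refine ⟨δ, δpos, fun x => ∑ t ∈ (Finset.univ : Finset (Fin M)).powerset,
      Real.exp (-(∑ k, v t k * h x k)), ?_, ?_, ?_⟩
  · exact integrable_finset_sum _ fun t _ => hvmem t
  · intro x
    exact Finset.sum_nonneg fun t _ => (Real.exp_pos _).le
  · intro lam hclose x
    have key : ∀ t : Finset (Fin M),
        Real.exp (-(∑ k, lamstar k * h x k)) *
            ((∏ k ∈ t, Real.exp (δ * h x k)) *
              ∏ k ∈ Finset.univ \ t, Real.exp (-δ * h x k))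
          = Real.exp (-(∑ k, v t k * h x k)) := by
      intro t
      rw [← Real.exp_sum, ← Real.exp_sum, ← Real.exp_add, ← Real.exp_add]
      congr 1
      have e1 : ∑ k : Fin M, (if k ∈ t then δ else -δ) * h x k
          = ∑ k ∈ t, δ * h x k + ∑ k ∈ Finset.univ \ t, -δ * h x k := by
        simp_rw [ite_mul]
        rw [Finset.sum_ite]
        congr 1
        · apply Finset.sum_congr
          · rw [Finset.filter_mem_eq_inter, Finset.univ_inter]
          · intros; rfl
        · apply Finset.sum_congr
          · rw [Finset.filter_not, Finset.filter_mem_eq_inter, Finset.univ_inter]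
          · intros; rfl
      have e2 : ∑ k : Fin M, v t k * h x k
          = ∑ k : Fin M, lamstar k * h x k - ∑ k : Fin M, (if k ∈ t then δ else -δ) * h x k := by
        rw [← Finset.sum_sub_distrib]
        apply Finset.sum_congr rfl
        intro k _
        simp only [hv]
        split <;> ring
      rw [← e1, e2]
      ring
    calc Real.exp (-(∑ k, lam k * h x k))
        = Real.exp (-(∑ k, lamstar k * h x k)) *
            Real.exp (∑ k, (lamstar k - lam k) * h x k) := by
          rw [← Real.exp_add]
          congr 1
          simp only [← Finset.sum_neg_distrib, ← Finset.sum_add_distrib]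
          exact Finset.sum_congr rfl fun k _ => by ring
      _ ≤ Real.exp (-(∑ k, lamstar k * h x k)) *
            ∏ k, (Real.exp (δ * h x k) + Real.exp (-δ * h x k)) := by
          have h1 : Real.exp (∑ k, (lamstar k - lam k) * h x k)
              ≤ Real.exp (∑ k, δ * |h x k|) := by
            apply Real.exp_le_exp.mpr
            apply Finset.sum_le_sum
            intro k _
            calc (lamstar k - lam k) * h x k ≤ |(lamstar k - lam k) * h x k| := le_abs_self _
              _ = |lamstar k - lam k| * |h x k| := abs_mul _ _
              _ ≤ δ * |h x k| := by
                  apply mul_le_mul_of_nonneg_right _ (abs_nonneg _)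
                  rw [abs_sub_comm]; exact hclose k
          have h2 : Real.exp (∑ k, δ * |h x k|)
              ≤ ∏ k, (Real.exp (δ * h x k) + Real.exp (-δ * h x k)) := by
            rw [Real.exp_sum]
            apply Finset.prod_le_prod (fun k _ => (Real.exp_pos _).le)
            intro k _
            rcases abs_choice (h x k) with hc | hc
            · rw [hc]
              nlinarith [Real.exp_pos (-δ * h x k)]
            · rw [hc, mul_neg, ← neg_mul]
              nlinarith [Real.exp_pos (δ * h x k)]
          calc Real.exp (-(∑ k, lamstar k * h x k)) * Real.exp (∑ k, (lamstar k - lam k) * h x k)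
              ≤ Real.exp (-(∑ k, lamstar k * h x k)) * Real.exp (∑ k, δ * |h x k|) :=
                mul_le_mul_of_nonneg_left h1 (Real.exp_pos _).le
            _ ≤ _ := mul_le_mul_of_nonneg_left h2 (Real.exp_pos _).le
      _ = ∑ t ∈ (Finset.univ : Finset (Fin M)).powerset,
            Real.exp (-(∑ k, v t k * h x k)) := by
          rw [Finset.prod_add, Finset.mul_sum]
          exact Finset.sum_congr rfl fun t _ => key t

/-- Main analytic lemma: if `λ_N → λ*` with `λ*` in the interior of the domain, then the
maxent densities converge in `L¹(m)`. -/
lemma maxent_L1_tendsto {S : Type*} [MeasurableSpace S] (m : Measure S)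
    {M : ℕ} (h : S → Fin M → ℝ) (hmeas : ∀ k, Measurable fun x => h x k)
    (lamstar : Fin M → ℝ) (hlam : lamstar ∈ interior (partitionDomain m h))
    (lamN : ℕ → Fin M → ℝ) (hconv : Tendsto lamN atTop (𝓝 lamstar)) :
    Tendsto (fun N => ∫ x, |maxentDensity m h (lamN N) x - maxentDensity m h lamstar x| ∂m)
      atTop (𝓝 0) := by
  classical
  by_cases hm : m = 0
  · subst hm
    simp only [integral_zero_measure]
    exact tendsto_const_nhds
  -- measurability of the exponential integrands
  have hexpmeas : ∀ lam : Fin M → ℝ,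
      Measurable fun x => Real.exp (-(∑ k, lam k * h x k)) := by
    intro lam
    exact (Measurable.neg (Finset.measurable_sum _ fun k _ => (hmeas k).const_mul _)).exp
  obtain ⟨δ, δpos, g, hg_int, hg_nonneg, hg_bound⟩ := exists_dominating m h lamstar hlam
  have hstar_mem : lamstar ∈ partitionDomain m h := interior_subset hlam
  have hstar_int : Integrable (fun x => Real.exp (-(∑ k, lamstar k * h x k))) m := hstar_mem
  -- eventually the coordinates of lamN are δ-close to lamstar
  have hev1 : ∀ᶠ N in atTop, ∀ k, |lamN N k - lamstar k| ≤ δ := by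
    filter_upwards [hconv.eventually (Metric.ball_mem_nhds lamstar δpos)] with N hN k
    have h2 := dist_le_pi_dist (lamN N) lamstar k
    have h3 : dist (lamN N) lamstar < δ := hN
    rw [Real.dist_eq] at h2
    linarith
  -- pointwise convergence of the exponentials
  have hptwise : ∀ x, Tendsto (fun N => Real.exp (-(∑ k, lamN N k * h x k))) atTop
      (𝓝 (Real.exp (-(∑ k, lamstar k * h x k)))) := by
    intro x
    apply (Real.continuous_exp.tendsto _).comp
    apply Tendsto.neg
    apply tendsto_finset_sum
    intro k _
    exact ((tendsto_pi_nhds.mp hconv k).mul tendsto_const_nhds)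
  -- the partition function converges
  have hZ : Tendsto (fun N => partitionZ m h (lamN N)) atTop (𝓝 (partitionZ m h lamstar)) := by
    apply tendsto_integral_filter_of_dominated_convergence g
    · exact Eventually.of_forall fun N => (hexpmeas _).aestronglyMeasurable
    · filter_upwards [hev1] with N hN
      apply ae_of_all
      intro x
      rw [Real.norm_eq_abs, abs_of_pos (Real.exp_pos _)]
      exact hg_bound _ hN x
    · exact hg_int
    · exact ae_of_all _ fun x => hptwise x
  have : NeZero m := ⟨hm⟩
  have hZpos : 0 < partitionZ m h lamstar := by
    apply integral_exp_pos (f := fun x => -(∑ k, lamstar k * h x k))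
    exact hstar_int
  set Zs := partitionZ m h lamstar with hZs
  have hevZ : ∀ᶠ N in atTop, Zs / 2 < partitionZ m h (lamN N) :=
    hZ.eventually (eventually_gt_nhds (by linarith))
  -- final dominated convergence
  have main : Tendsto (fun N => ∫ x, |maxentDensity m h (lamN N) x
      - maxentDensity m h lamstar x| ∂m) atTop (𝓝 (∫ x, (0 : ℝ) ∂m)) := by
    apply tendsto_integral_filter_of_dominated_convergence
      (fun x => (2 / Zs) * g x + Real.exp (-(∑ k, lamstar k * h x k)) / Zs)
    · apply Eventually.of_forall
      intro N
      apply Measurable.aestronglyMeasurable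
      apply Measurable.abs
      exact ((hexpmeas _).div_const _).sub ((hexpmeas _).div_const _)
    · filter_upwards [hev1, hevZ] with N h1 h2
      apply ae_of_all
      intro x
      rw [Real.norm_eq_abs, abs_abs]
      have hZN : (0:ℝ) < partitionZ m h (lamN N) := lt_trans (by linarith) h2
      have b1 : |maxentDensity m h (lamN N) x| ≤ (2 / Zs) * g x := by
        rw [maxentDensity, abs_of_nonneg (div_nonneg (Real.exp_pos _).le hZN.le)]
        have : Real.exp (-(∑ k, lamN N k * h x k)) / partitionZ m h (lamN N)
            ≤ g x / (Zs / 2) :=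
          div_le_div₀ (hg_nonneg x) (hg_bound _ h1 x) (by linarith) h2.le
        calc Real.exp (-(∑ k, lamN N k * h x k)) / partitionZ m h (lamN N)
            ≤ g x / (Zs / 2) := this
          _ = (2 / Zs) * g x := by field_simp
      have b2 : |maxentDensity m h lamstar x|
          = Real.exp (-(∑ k, lamstar k * h x k)) / Zs := by
        rw [maxentDensity, abs_of_nonneg (div_nonneg (Real.exp_pos _).le hZpos.le)]
      calc |maxentDensity m h (lamN N) x - maxentDensity m h lamstar x|
          ≤ |maxentDensity m h (lamN N) x| + |maxentDensity m h lamstar x| := by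
            simpa [sub_eq_add_neg, abs_neg] using
              abs_add_le (maxentDensity m h (lamN N) x) (-(maxentDensity m h lamstar x))
        _ ≤ (2 / Zs) * g x + Real.exp (-(∑ k, lamstar k * h x k)) / Zs := by
            rw [b2]; exact add_le_add b1 le_rfl
    · exact (hg_int.const_mul _).add (hstar_int.div_const _)
    · apply ae_of_all
      intro x
      have hnum := hptwise x
      have : Tendsto (fun N => maxentDensity m h (lamN N) x) atTop
          (𝓝 (maxentDensity m h lamstar x)) := by
        unfold maxentDensity
        exact hnum.div hZ hZpos.ne'
      have := (this.sub (tendsto_const_nhds (x := maxentDensity m h lamstar x))).abs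
      simpa using this
  simpa using main

/-- for i.i.d. samples with `E[h(X₁)] = d = φ(λ*)`, the sample maximum-entropy
densities `f_{ψ(d̂_N)}` converge to `f* = f_{λ*}` in `L¹(m)` almost surely. -/
theorem sample_maxent_L1_convergence
    {S : Type*} [MeasurableSpace S] (m : Measure S) [SigmaFinite m]
    {M : ℕ} (h : S → Fin M → ℝ) (hmeas : ∀ k, Measurable fun x => h x k)
    (lamstar : Fin M → ℝ) (hlam : lamstar ∈ interior (partitionDomain m h))
    (C : Matrix (Fin M) (Fin M) ℝ)
    (hC : ∀ j k, C j k = ∫ x, h x j * h x k * maxentDensity m h lamstar x ∂m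
        - momentMap m h lamstar j * momentMap m h lamstar k)
    (hCpd : C.PosDef)
    (V : Set (Fin M → ℝ)) (hVopen : IsOpen V) (hdV : momentMap m h lamstar ∈ V)
    (psi : (Fin M → ℝ) → (Fin M → ℝ))
    (hpsiC1 : ContDiffOn ℝ 1 psi V)
    (hpsistar : psi (momentMap m h lamstar) = lamstar)
    (hpsiinv : ∀ d' ∈ V, momentMap m h (psi d') = d')
    {Ω : Type*} [MeasurableSpace Ω] (μ : Measure Ω) [IsProbabilityMeasure μ]
    (X : ℕ → Ω → S) (hXmeas : ∀ n, Measurable (X n))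
    (hindep : iIndepFun X μ)
    (hid : ∀ n, IdentDistrib (X n) (X 0) μ μ)
    (hint : ∀ k, Integrable (fun ω => h (X 0 ω) k) μ)
    (hmean : ∀ k, ∫ ω, h (X 0 ω) k ∂μ = momentMap m h lamstar k) :
    ∀ᵐ ω ∂μ,
      Tendsto
        (fun N => ∫ x, |maxentDensity m h (psi (empiricalMoments h X N ω)) x
            - maxentDensity m h lamstar x| ∂m)
        atTop (nhds 0) := by
  have slln : ∀ k : Fin M, ∀ᵐ ω ∂μ,
      Tendsto (fun N : ℕ => (∑ n ∈ Finset.range N, h (X n ω) k) / N) atTop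
        (𝓝 (momentMap m h lamstar k)) := by
    intro k
    have hpair : Pairwise (Function.onFun (IndepFun · · μ) fun n ω => h (X n ω) k) := by
      intro i j hij
      exact (hindep.indepFun hij).comp (hmeas k) (hmeas k)
    have hident : ∀ n, IdentDistrib (fun ω => h (X n ω) k) (fun ω => h (X 0 ω) k) μ μ :=
      fun n => (hid n).comp (hmeas k)
    have key := strong_law_ae_real (fun n ω => h (X n ω) k) (hint k) hpair hident
    have : (μ[fun ω => h (X 0 ω) k]) = momentMap m h lamstar k := hmean k
    rwa [this] at key
  have hae : ∀ᵐ ω ∂μ, ∀ k : Fin M,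
      Tendsto (fun N : ℕ => (∑ n ∈ Finset.range N, h (X n ω) k) / N) atTop
        (𝓝 (momentMap m h lamstar k)) := (ae_all_iff).mpr slln
  filter_upwards [hae] with ω hω
  have hemp : Tendsto (fun N => empiricalMoments h X N ω) atTop
      (𝓝 (momentMap m h lamstar)) := by
    rw [tendsto_pi_nhds]
    intro k
    have hk := hω k
    have : ∀ N : ℕ, empiricalMoments h X N ω k
        = (∑ n ∈ Finset.range N, h (X n ω) k) / N := by
      intro N
      simp [empiricalMoments, Finset.sum_apply, div_eq_inv_mul]
    simpa only [this] using hk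
  have hψ : ContinuousAt psi (momentMap m h lamstar) :=
    hpsiC1.continuousOn.continuousAt (hVopen.mem_nhds hdV)
  have hlamN : Tendsto (fun N => psi (empiricalMoments h X N ω)) atTop (𝓝 lamstar) := by
    rw [← hpsistar]
    exact hψ.tendsto.comp hemp
  exact maxent_L1_tendsto m h hmeas lamstar hlam _ hlamN
end

section
/- Let g : S → ℝ be bounded and measurable, and set w(g) = ∫_S g(x)(h(x) − d) f*(x) dm(x) ∈ ℝ^M and δd = d̂_N − d. Then ∫_S g f̂^lin_N dm − ∫_S g f* dm = ⟨w(g), C⁻¹ δd⟩, and consequently (∫_S g f̂^lin_N dm − ∫_S g f* dm)² ≤ ⟨w(g), C⁻¹ w(g)⟩ · ⟨δd, C⁻¹ δd⟩. -/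
open MeasureTheory Matrix

open scoped MatrixOrder in
/-- Cauchy–Schwarz for a positive semidefinite real matrix. -/
lemma possemidef_cauchy_schwarz {M : ℕ} {P : Matrix (Fin M) (Fin M) ℝ}
    (hP : P.PosSemidef) (a b : Fin M → ℝ) :
    (a ⬝ᵥ (P *ᵥ b)) ^ 2 ≤ (a ⬝ᵥ (P *ᵥ a)) * (b ⬝ᵥ (P *ᵥ b)) := by
  set Q := CFC.sqrt P with hQ
  have hQs : Q * Q = P := CFC.sqrt_mul_sqrt_self P (Matrix.nonneg_iff_posSemidef.mpr hP)
  have hQsymm : Qᵀ = Q := by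
    have := (Matrix.nonneg_iff_posSemidef.mp (CFC.sqrt_nonneg P)).isHermitian
    rw [Matrix.IsHermitian, Matrix.conjTranspose_eq_transpose_of_trivial] at this
    exact this
  have key : ∀ u v : Fin M → ℝ, u ⬝ᵥ (P *ᵥ v) = (Q *ᵥ u) ⬝ᵥ (Q *ᵥ v) := by
    intro u v
    rw [← hQs, ← Matrix.mulVec_mulVec, Matrix.dotProduct_mulVec u Q,
      ← Matrix.mulVec_transpose, hQsymm]
  rw [key a b, key a a, key b b]
  have h2 := real_inner_mul_inner_self_le (F := EuclideanSpace ℝ (Fin M))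
    (WithLp.toLp 2 (Q *ᵥ a)) (WithLp.toLp 2 (Q *ᵥ b))
  simp only [PiLp.inner_apply] at h2
  simpa [PiLp.inner_apply, dotProduct, RCLike.inner_apply, sq,
    mul_comm] using h2

/-- The linearized maximum-entropy density
`f̂ˡⁱⁿ(x) = f*(x) (1 + ⟨h(x) − d, C⁻¹ (d̂ − d)⟩)`. -/
noncomputable def linearizedMaxent {S : Type*} {M : ℕ} (h : S → Fin M → ℝ)
    (fstar : S → ℝ) (d : Fin M → ℝ) (C : Matrix (Fin M) (Fin M) ℝ)
    (dhat : Fin M → ℝ) (x : S) : ℝ :=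
  fstar x * (1 + (fun k => h x k - d k) ⬝ᵥ (C⁻¹ *ᵥ (dhat - d)))

/-- for bounded measurable `g`, with `w(g) = ∫ g (h − d) f* dm` and
`δd = d̂_N − d`, one has `∫ g f̂ˡⁱⁿ_N dm − ∫ g f* dm = ⟨w(g), C⁻¹ δd⟩`, and hence by
Cauchy–Schwarz `(∫ g f̂ˡⁱⁿ_N dm − ∫ g f* dm)² ≤ ⟨w(g), C⁻¹ w(g)⟩ ⟨δd, C⁻¹ δd⟩`. -/
theorem linearizedMaxent_integral_bound
    {S : Type*} [MeasurableSpace S] (m : Measure S) [SigmaFinite m]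
    {M : ℕ} (h : S → Fin M → ℝ) (hmeas : ∀ k, Measurable fun x => h x k)
    (fstar : S → ℝ) (hfmeas : Measurable fstar) (hfnonneg : 0 ≤ᵐ[m] fstar)
    (hfint : Integrable fstar m) (hfone : ∫ x, fstar x ∂m = 1)
    (d : Fin M → ℝ)
    (hmom_int : ∀ k, Integrable (fun x => h x k * fstar x) m)
    (hd : ∀ k, ∫ x, h x k * fstar x ∂m = d k)
    (C : Matrix (Fin M) (Fin M) ℝ)
    (hC : ∀ j k, C j k = ∫ x, h x j * h x k * fstar x ∂m - d j * d k)
    (hCpd : C.PosDef)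
    (dhat : Fin M → ℝ)
    (g : S → ℝ) (hgmeas : Measurable g) (hgbdd : ∃ B : ℝ, ∀ x, |g x| ≤ B)
    (hgf_int : Integrable (fun x => g x * fstar x) m)
    (hghf_int : ∀ k, Integrable (fun x => g x * h x k * fstar x) m)
    (w : Fin M → ℝ)
    (hw : ∀ k, w k = ∫ x, g x * (h x k - d k) * fstar x ∂m) :
    (∫ x, g x * linearizedMaxent h fstar d C dhat x ∂m - ∫ x, g x * fstar x ∂m
      = w ⬝ᵥ (C⁻¹ *ᵥ (dhat - d))) ∧
    (∫ x, g x * linearizedMaxent h fstar d C dhat x ∂m - ∫ x, g x * fstar x ∂m) ^ 2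
      ≤ (w ⬝ᵥ (C⁻¹ *ᵥ w)) * ((dhat - d) ⬝ᵥ (C⁻¹ *ᵥ (dhat - d))) := by
  set v : Fin M → ℝ := C⁻¹ *ᵥ (dhat - d) with hv
  -- integrability of each summand
  have hFint : ∀ k, Integrable (fun x => g x * (h x k - d k) * fstar x * v k) m := by
    intro k
    have : (fun x => g x * (h x k - d k) * fstar x * v k)
        = fun x => (g x * h x k * fstar x - d k * (g x * fstar x)) * v k := by
      funext x; ring
    rw [this]
    exact ((hghf_int k).sub (hgf_int.const_mul (d k))).mul_const (v k)
  -- decompose the integrand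
  have hsplit : (fun x => g x * linearizedMaxent h fstar d C dhat x)
      = fun x => g x * fstar x + ∑ k, g x * (h x k - d k) * fstar x * v k := by
    funext x
    simp only [linearizedMaxent, dotProduct, ← hv, mul_add, mul_one,
      Finset.mul_sum]
    congr 1
    exact Finset.sum_congr rfl fun k _ => by ring
  have hint : ∫ x, g x * linearizedMaxent h fstar d C dhat x ∂m
      = ∫ x, g x * fstar x ∂m + ∑ k, w k * v k := by
    rw [hsplit, integral_add hgf_int (integrable_finset_sum _ fun k _ => hFint k),
      integral_finset_sum _ fun k _ => hFint k]
    congr 1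
    refine Finset.sum_congr rfl fun k _ => ?_
    rw [integral_mul_const, hw k]
  have part1 : ∫ x, g x * linearizedMaxent h fstar d C dhat x ∂m
      - ∫ x, g x * fstar x ∂m = w ⬝ᵥ (C⁻¹ *ᵥ (dhat - d)) := by
    rw [hint, ← hv]
    simp [dotProduct]
  refine ⟨part1, ?_⟩
  rw [part1]
  exact possemidef_cauchy_schwarz hCpd.inv.posSemidef w (dhat - d)
end

section
/- Let g : S → ℝ be bounded and measurable, w(g) = ∫_S g(x)(h(x) − d) f*(x) dm(x), and let (X_n) be i.i.d. with E[h(X₁)] = d and covariance matrix Σ of h(X₁). Then for every a > 0, ℙ(|∫_S g f̂^lin_N dm − ∫_S g f* dm| ≤ a) ≥ 1 − ⟨w(g), C⁻¹ w(g)⟩ · tr(C⁻¹ Σ)/(N a²). -/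
open MeasureTheory ProbabilityTheory Matrix

/-- Cauchy–Schwarz inequality for a real positive semidefinite matrix. -/
lemma psd_cauchy_schwarz {M : ℕ} {C : Matrix (Fin M) (Fin M) ℝ} (hC : C.PosSemidef)
    (a b : Fin M → ℝ) :
    (a ⬝ᵥ (C *ᵥ b)) ^ 2 ≤ (a ⬝ᵥ (C *ᵥ a)) * (b ⬝ᵥ (C *ᵥ b)) := by
  have hCt : Cᵀ = C := by
    ext i j
    have := congrFun (congrFun hC.isHermitian.eq i) j
    simpa [Matrix.conjTranspose_apply] using this
  have hsym : ∀ u z : Fin M → ℝ, u ⬝ᵥ (C *ᵥ z) = z ⬝ᵥ (C *ᵥ u) := by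
    intro u z
    rw [Matrix.dotProduct_mulVec, ← Matrix.mulVec_transpose, hCt, dotProduct_comm]
  have hnn : ∀ x : Fin M → ℝ, 0 ≤ x ⬝ᵥ (C *ᵥ x) := by
    intro x
    simpa using hC.dotProduct_mulVec_nonneg x
  have key : ∀ t : ℝ, 0 ≤ (b ⬝ᵥ (C *ᵥ b)) * (t * t) + (2 * (a ⬝ᵥ (C *ᵥ b))) * t
      + (a ⬝ᵥ (C *ᵥ a)) := by
    intro t
    have h0 := hnn (a + t • b)
    have hexp : (a + t • b) ⬝ᵥ (C *ᵥ (a + t • b))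
        = (b ⬝ᵥ (C *ᵥ b)) * (t * t) + (2 * (a ⬝ᵥ (C *ᵥ b))) * t + (a ⬝ᵥ (C *ᵥ a)) := by
      rw [Matrix.mulVec_add, Matrix.mulVec_smul, add_dotProduct,
        smul_dotProduct, dotProduct_add, dotProduct_add,
        dotProduct_smul, dotProduct_smul, hsym b a]
      simp only [smul_eq_mul]
      ring
    rw [hexp] at h0
    exact h0
  have hd := discrim_le_zero key
  rw [discrim] at hd
  nlinarith [hd]

/-- for bounded measurable `g` and i.i.d. samples, the probability that
`|∫ g f̂ˡⁱⁿ_N dm − ∫ g f* dm| ≤ a` is at least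
`1 − ⟨w(g), C⁻¹ w(g)⟩ tr(C⁻¹ Σ)/(N a²)`. -/
theorem linearizedMaxent_probability_bound
    {S : Type*} [MeasurableSpace S] (m : Measure S) [SigmaFinite m]
    {M : ℕ} (h : S → Fin M → ℝ) (hmeas : ∀ k, Measurable fun x => h x k)
    (fstar : S → ℝ) (hfmeas : Measurable fstar) (hfnonneg : 0 ≤ᵐ[m] fstar)
    (hfint : Integrable fstar m) (hfone : ∫ x, fstar x ∂m = 1)
    (d : Fin M → ℝ)
    (hmom_int : ∀ k, Integrable (fun x => h x k * fstar x) m)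
    (hd : ∀ k, ∫ x, h x k * fstar x ∂m = d k)
    (C : Matrix (Fin M) (Fin M) ℝ)
    (hC : ∀ j k, C j k = ∫ x, h x j * h x k * fstar x ∂m - d j * d k)
    (hCpd : C.PosDef)
    {Ω : Type*} [MeasurableSpace Ω] (μ : Measure Ω) [IsProbabilityMeasure μ]
    (X : ℕ → Ω → S) (hXmeas : ∀ n, Measurable (X n))
    (hindep : iIndepFun X μ)
    (hid : ∀ n, IdentDistrib (X n) (X 0) μ μ)
    (hsq : ∀ j k, Integrable (fun ω => h (X 0 ω) j * h (X 0 ω) k) μ)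
    (hint : ∀ k, Integrable (fun ω => h (X 0 ω) k) μ)
    (hmean : ∀ k, ∫ ω, h (X 0 ω) k ∂μ = d k)
    (Sig : Matrix (Fin M) (Fin M) ℝ)
    (hSig : ∀ j k, Sig j k = ∫ ω, (h (X 0 ω) j - d j) * (h (X 0 ω) k - d k) ∂μ)
    (g : S → ℝ) (hgmeas : Measurable g) (hgbdd : ∃ B : ℝ, ∀ x, |g x| ≤ B)
    (hgf_int : Integrable (fun x => g x * fstar x) m)
    (hghf_int : ∀ k, Integrable (fun x => g x * h x k * fstar x) m)
    (w : Fin M → ℝ)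
    (hw : ∀ k, w k = ∫ x, g x * (h x k - d k) * fstar x ∂m)
    (N : ℕ) (hN : 0 < N) :
    ∀ a : ℝ, 0 < a →
      1 - ENNReal.ofReal ((w ⬝ᵥ (C⁻¹ *ᵥ w)) * (C⁻¹ * Sig).trace / (N * a ^ 2))
        ≤ μ {ω | |∫ x, g x * linearizedMaxent h fstar d C (empiricalMoments h X N ω) x ∂m
              - ∫ x, g x * fstar x ∂m| ≤ a} := by
  classical
  intro a ha
  have hNne : (N : ℝ) ≠ 0 := Nat.cast_ne_zero.mpr hN.ne'
  have hdet : IsUnit C.det := isUnit_iff_ne_zero.mpr hCpd.det_pos.ne'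
  have hCsymm : Cᵀ = C := by
    ext i j
    have := congrFun (congrFun hCpd.isHermitian.eq i) j
    simpa [Matrix.conjTranspose_apply] using this
  have hCinvsymm : C⁻¹ᵀ = C⁻¹ := by rw [Matrix.transpose_nonsing_inv, hCsymm]
  set v : Fin M → ℝ := C⁻¹ *ᵥ w with hv
  have hdotswap : ∀ u : Fin M → ℝ, w ⬝ᵥ (C⁻¹ *ᵥ u) = v ⬝ᵥ u := by
    intro u
    rw [Matrix.dotProduct_mulVec]
    congr 1
    rw [← Matrix.mulVec_transpose, hCinvsymm]
  set φ : S → ℝ := fun x => ∑ k, v k * (h x k - d k) with hφ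
  have hφmeas : Measurable φ :=
    Finset.measurable_sum _ fun k _ => (((hmeas k).sub measurable_const).const_mul _)
  set Y : ℕ → Ω → ℝ := fun n ω => φ (X n ω) with hY
  have hYmeas : ∀ n, Measurable (Y n) := fun n => hφmeas.comp (hXmeas n)
  -- integrability of g (h_k - d_k) f*
  have hsub_int : ∀ k, Integrable (fun x => g x * (h x k - d k) * fstar x) m := by
    intro k
    have heq : (fun x => g x * (h x k - d k) * fstar x)
        = fun x => g x * h x k * fstar x - d k * (g x * fstar x) := by
      funext x; ring
    rw [heq]
    exact (hghf_int k).sub (hgf_int.const_mul (d k))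
  -- the key pointwise identity
  have hkey : ∀ ω : Ω,
      ∫ x, g x * linearizedMaxent h fstar d C (empiricalMoments h X N ω) x ∂m
        - ∫ x, g x * fstar x ∂m
      = (N : ℝ)⁻¹ * ∑ n ∈ Finset.range N, Y n ω := by
    intro ω
    set u : Fin M → ℝ := empiricalMoments h X N ω - d with hu
    set c : Fin M → ℝ := C⁻¹ *ᵥ u with hc
    have hintegrand : ∀ x, g x * linearizedMaxent h fstar d C (empiricalMoments h X N ω) x
        = g x * fstar x + ∑ k, c k * (g x * (h x k - d k) * fstar x) := by
      intro x
      simp only [linearizedMaxent, dotProduct, ← hu, ← hc, mul_add, mul_one,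
        Finset.mul_sum]
      congr 1
      refine Finset.sum_congr rfl fun k _ => ?_
      ring
    have h1 : ∫ x, g x * linearizedMaxent h fstar d C (empiricalMoments h X N ω) x ∂m
        = ∫ x, (g x * fstar x + ∑ k, c k * (g x * (h x k - d k) * fstar x)) ∂m := by
      congr 1
      funext x
      exact hintegrand x
    have h2 : ∫ x, (g x * fstar x + ∑ k, c k * (g x * (h x k - d k) * fstar x)) ∂m
        = (∫ x, g x * fstar x ∂m) + ∑ k, c k * w k := by
      rw [integral_add hgf_int
        (integrable_finset_sum _ fun k _ => (hsub_int k).const_mul (c k)),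
        integral_finset_sum _ fun k _ => (hsub_int k).const_mul (c k)]
      congr 1
      refine Finset.sum_congr rfl fun k _ => ?_
      rw [integral_const_mul, ← hw k]
    have h3 : ∑ k, c k * w k = v ⬝ᵥ u := by
      rw [← hdotswap u, ← hc]
      simp only [dotProduct]
      exact Finset.sum_congr rfl fun k _ => by ring
    have h4 : v ⬝ᵥ u = (N : ℝ)⁻¹ * ∑ n ∈ Finset.range N, Y n ω := by
      have huvec : u = (N : ℝ)⁻¹ • ∑ n ∈ Finset.range N, (fun k => h (X n ω) k - d k) := by
        funext k
        simp only [hu, empiricalMoments, Pi.sub_apply, Pi.smul_apply, Finset.sum_apply,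
          smul_eq_mul, Finset.sum_sub_distrib, Finset.sum_const, Finset.card_range,
          nsmul_eq_mul, mul_sub]
        rw [← mul_assoc, inv_mul_cancel₀ hNne, one_mul]
      rw [huvec]
      simp only [dotProduct, Pi.smul_apply, Finset.sum_apply, smul_eq_mul, hY, hφ]
      calc ∑ k, v k * ((↑N)⁻¹ * ∑ n ∈ Finset.range N, (h (X n ω) k - d k))
          = ∑ k, ∑ n ∈ Finset.range N, (↑N)⁻¹ * (v k * (h (X n ω) k - d k)) := by
            refine Finset.sum_congr rfl fun k _ => ?_
            rw [Finset.mul_sum, Finset.mul_sum]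
            exact Finset.sum_congr rfl fun n _ => by ring
        _ = ∑ n ∈ Finset.range N, ∑ k, (↑N)⁻¹ * (v k * (h (X n ω) k - d k)) :=
            Finset.sum_comm
        _ = ∑ n ∈ Finset.range N, (↑N)⁻¹ * ∑ k, v k * (h (X n ω) k - d k) := by
            refine Finset.sum_congr rfl fun n _ => ?_
            rw [Finset.mul_sum]
        _ = (↑N)⁻¹ * ∑ n ∈ Finset.range N, ∑ k, v k * (h (X n ω) k - d k) :=
            (Finset.mul_sum _ _ _).symm
    rw [h1, h2, h3, h4]
    ring
  -- ℒ² properties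
  have hl2_0 : ∀ k, MemLp (fun ω => h (X 0 ω) k) 2 μ := by
    intro k
    have hm : AEStronglyMeasurable (fun ω => h (X 0 ω) k) μ :=
      ((hmeas k).comp (hXmeas 0)).aestronglyMeasurable
    rw [memLp_two_iff_integrable_sq hm]
    simpa [pow_two] using hsq k k
  have hY0l2 : MemLp (Y 0) 2 μ := by
    have : Y 0 = fun ω => ∑ k, v k * (h (X 0 ω) k - d k) := rfl
    rw [this]
    exact memLp_finsetSum Finset.univ fun k _ =>
      ((hl2_0 k).sub (memLp_const (d k))).const_mul (v k)
  have hidY : ∀ n, IdentDistrib (Y n) (Y 0) μ μ := fun n => (hid n).comp hφmeas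
  have hYl2 : ∀ n, MemLp (Y n) 2 μ := fun n => (hidY n).symm.memLp_snd hY0l2
  -- mean zero
  have hY0mean : ∫ ω, Y 0 ω ∂μ = 0 := by
    have : (fun ω => Y 0 ω) = fun ω => ∑ k, v k * (h (X 0 ω) k - d k) := rfl
    have hterm : ∀ k : Fin M, Integrable (fun ω => v k * (h (X 0 ω) k - d k)) μ := fun k =>
      ((hint k).sub (integrable_const (d k))).const_mul (v k)
    rw [this, integral_finset_sum _ fun k _ => hterm k]
    refine Finset.sum_eq_zero fun k _ => ?_
    rw [integral_const_mul, integral_sub (hint k) (integrable_const (d k)), hmean k]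
    simp
  have hYmean : ∀ n, ∫ ω, Y n ω ∂μ = 0 := fun n => by
    rw [(hidY n).integral_eq]; exact hY0mean
  -- independence
  have hindepY : Set.Pairwise ↑(Finset.range N) fun i j => IndepFun (Y i) (Y j) μ :=
    fun i _ j _ hij => (hindep.indepFun hij).comp hφmeas hφmeas
  have hsumvar : variance (∑ n ∈ Finset.range N, Y n) μ = N * variance (Y 0) μ := by
    rw [IndepFun.variance_sum (fun n _ => hYl2 n) hindepY]
    have : ∀ n ∈ Finset.range N, variance (Y n) μ = variance (Y 0) μ :=
      fun n _ => (hidY n).variance_eq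
    rw [Finset.sum_congr rfl this]
    simp [Finset.sum_const, Finset.card_range, nsmul_eq_mul]
  -- variance bound for Y 0
  set A : ℝ := w ⬝ᵥ (C⁻¹ *ᵥ w) with hA
  have hAnn : 0 ≤ A := by
    have := hCpd.inv.posSemidef.dotProduct_mulVec_nonneg w
    simpa [hA] using this
  have hA_eq : v ⬝ᵥ (C *ᵥ v) = A := by
    have hCv : C *ᵥ v = w := by
      rw [hv, Matrix.mulVec_mulVec, Matrix.mul_nonsing_inv _ hdet, Matrix.one_mulVec]
    rw [hCv, hA]
    exact (hdotswap w).symm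
  have hYsq_int : ∀ j k, Integrable (fun ω => (h (X 0 ω) j - d j) * (h (X 0 ω) k - d k)) μ := by
    intro j k
    have heq : (fun ω => (h (X 0 ω) j - d j) * (h (X 0 ω) k - d k))
        = fun ω => h (X 0 ω) j * h (X 0 ω) k - d j * h (X 0 ω) k
            - d k * h (X 0 ω) j + d j * d k := by
      funext ω; ring
    rw [heq]
    exact (((hsq j k).sub ((hint k).const_mul (d j))).sub
      ((hint j).const_mul (d k))).add (integrable_const _)
  set q : Ω → ℝ := fun ω => ∑ j, ∑ k, C⁻¹ j k * ((h (X 0 ω) j - d j) * (h (X 0 ω) k - d k))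
    with hq
  have hq_int : Integrable q μ :=
    integrable_finset_sum _ fun j _ => integrable_finset_sum _ fun k _ =>
      (hYsq_int j k).const_mul _
  have hq_integral : ∫ ω, q ω ∂μ = (C⁻¹ * Sig).trace := by
    simp only [hq]
    rw [integral_finset_sum _ fun j _ => integrable_finset_sum _ fun k _ =>
      (hYsq_int j k).const_mul (C⁻¹ j k)]
    have htr : (C⁻¹ * Sig).trace = ∑ j, ∑ k, C⁻¹ j k * Sig k j := by
      simp [Matrix.trace, Matrix.mul_apply, Matrix.diag]
    rw [htr]
    refine Finset.sum_congr rfl fun j _ => ?_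
    rw [integral_finset_sum _ fun k _ => (hYsq_int j k).const_mul (C⁻¹ j k)]
    refine Finset.sum_congr rfl fun k _ => ?_
    rw [integral_const_mul, ← hSig j k]
    have : Sig k j = Sig j k := by
      rw [hSig, hSig]
      congr 1
      funext ω
      ring
    rw [this]
  have hpt : ∀ ω, (Y 0 ω) ^ 2 ≤ A * q ω := by
    intro ω
    set z : Fin M → ℝ := fun k => h (X 0 ω) k - d k with hz
    have h1 := psd_cauchy_schwarz hCpd.posSemidef v (C⁻¹ *ᵥ z)
    have h2 : C *ᵥ (C⁻¹ *ᵥ z) = z := by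
      rw [Matrix.mulVec_mulVec, Matrix.mul_nonsing_inv _ hdet, Matrix.one_mulVec]
    rw [h2, hA_eq] at h1
    have h3 : Y 0 ω = v ⬝ᵥ z := by
      simp [hY, hφ, dotProduct, hz]
    have h4 : (C⁻¹ *ᵥ z) ⬝ᵥ z = q ω := by
      simp only [dotProduct, Matrix.mulVec, hq, hz]
      refine Finset.sum_congr rfl fun j _ => ?_
      rw [Finset.sum_mul]
      refine Finset.sum_congr rfl fun k _ => ?_
      ring
    rw [h4] at h1
    rw [h3]
    exact h1
  have hvar0 : variance (Y 0) μ ≤ A * (C⁻¹ * Sig).trace := by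
    have hvd := variance_eq_sub hY0l2
    have hsq_int : Integrable (fun ω => (Y 0 ω) ^ 2) μ := by
      simpa [pow_two] using hY0l2.integrable_sq
    have hmono : ∫ ω, (Y 0 ω) ^ 2 ∂μ ≤ ∫ ω, A * q ω ∂μ :=
      integral_mono hsq_int (hq_int.const_mul A) hpt
    have : ∫ ω, A * q ω ∂μ = A * (C⁻¹ * Sig).trace := by
      rw [integral_const_mul, hq_integral]
    calc variance (Y 0) μ = (∫ ω, (Y 0 ω) ^ 2 ∂μ) - (∫ ω, Y 0 ω ∂μ) ^ 2 := by
          simpa [Pi.pow_apply] using hvd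
      _ ≤ ∫ ω, (Y 0 ω) ^ 2 ∂μ := by
          rw [hY0mean]; simp
      _ ≤ A * (C⁻¹ * Sig).trace := by rw [← this]; exact hmono
  -- Chebyshev for Z
  set Z : Ω → ℝ := fun ω => (N : ℝ)⁻¹ * ∑ n ∈ Finset.range N, Y n ω with hZ
  have hZsmul : Z = (N : ℝ)⁻¹ • ∑ n ∈ Finset.range N, Y n := by
    funext ω
    simp [hZ, Finset.sum_apply]
  have hZl2 : MemLp Z 2 μ := by
    rw [hZsmul]
    exact (memLp_finsetSum' _ fun n _ => hYl2 n).const_smul _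
  have hZmeas : Measurable Z :=
    (Finset.measurable_sum _ fun n _ => hYmeas n).const_mul _
  have hZmean : ∫ ω, Z ω ∂μ = 0 := by
    simp only [hZ]
    rw [integral_const_mul, integral_finset_sum _ fun n _ => (hYl2 n).integrable one_le_two]
    simp [hYmean]
  have hZvar : variance Z μ ≤ A * (C⁻¹ * Sig).trace / N := by
    have h1 : variance Z μ = ((N : ℝ)⁻¹) ^ 2 * variance (∑ n ∈ Finset.range N, Y n) μ := by
      rw [hZsmul]
      exact variance_smul _ _ _
    rw [h1, hsumvar]
    have h2 : ((N : ℝ)⁻¹) ^ 2 * ((N : ℝ) * variance (Y 0) μ) = variance (Y 0) μ / N := by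
      field_simp
    rw [h2]
    exact div_le_div_of_nonneg_right hvar0 (by positivity) |>.trans_eq rfl
  have hcheb := meas_ge_le_variance_div_sq hZl2 ha
  have hZint : μ[Z] = 0 := hZmean
  rw [hZint] at hcheb
  simp only [sub_zero] at hcheb
  -- final set manipulations
  have hTeq : {ω | |∫ x, g x * linearizedMaxent h fstar d C (empiricalMoments h X N ω) x ∂m
      - ∫ x, g x * fstar x ∂m| ≤ a} = {ω | |Z ω| ≤ a} := by
    ext ω
    simp only [Set.mem_setOf_eq, hkey ω, hZ]
  rw [hTeq]
  have hms : MeasurableSet {ω | |Z ω| ≤ a} :=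
    measurableSet_le hZmeas.abs measurable_const
  have hcompl : μ {ω | |Z ω| ≤ a}ᶜ ≤ ENNReal.ofReal (A * (C⁻¹ * Sig).trace / (N * a ^ 2)) := by
    have hsub : {ω | |Z ω| ≤ a}ᶜ ⊆ {ω | a ≤ |Z ω|} := by
      intro ω hω
      simp only [Set.mem_compl_iff, Set.mem_setOf_eq, not_le] at hω
      exact hω.le
    refine (measure_mono hsub).trans (hcheb.trans (ENNReal.ofReal_le_ofReal ?_))
    have : variance Z μ / a ^ 2 ≤ (A * (C⁻¹ * Sig).trace / N) / a ^ 2 :=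
      div_le_div_of_nonneg_right hZvar (by positivity)
    refine this.trans_eq ?_
    rw [div_div]
  calc 1 - ENNReal.ofReal (A * (C⁻¹ * Sig).trace / (↑N * a ^ 2))
      ≤ 1 - μ {ω | |Z ω| ≤ a}ᶜ := tsub_le_tsub_left hcompl 1
    _ = μ {ω | |Z ω| ≤ a} := by
        rw [prob_compl_eq_one_sub hms]
        exact ENNReal.sub_sub_cancel ENNReal.one_ne_top prob_le_one
end
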